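/- Combining the above identities: under the stated regularity hypotheses, the policy gradient satisfies ∂_θ J(θ) = ∂_θ [ -KL(p_θ ‖ p_A) + KL(p_θ ‖ p_old) ], where J(θ) = E_{p_θ}[A], p_A = p_old·exp(A)/Z, and p_old, A, Z are held fixed (independent of θ). -/

import Mathlib

open MeasureTheory

/-- Mode-seeking form of the policy gradient: with p_A = p_old·exp(A)/Z fixed
(independent of θ), under the stated regularity/integrability hypotheses,
∂_θ E_{p_θ}[A] = ∂_θ [ -KL(p_θ‖p_A) + KL(p_θ‖p_old) ]. -/
theorem policy_gradient_kl_form {α : Type*} [MeasurableSpace α]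
    (ν : Measure α) [SigmaFinite ν]
    (p : ℝ → α → ℝ) (pOld : α → ℝ) (A : α → ℝ) (Z : ℝ) (θ₀ : ℝ)
    (hpθ : ∀ θ x, 0 ≤ p θ x) (hpθInt : ∀ θ, ∫ x, p θ x ∂ν = 1)
    (hpOld : ∀ x, 0 ≤ pOld x) (hpOldInt : ∫ x, pOld x ∂ν = 1)
    (hAmeas : Measurable A) (C : ℝ) (hAbd : ∀ x, |A x| ≤ C)
    (hZ : Z = ∫ x, pOld x * Real.exp (A x) ∂ν) (hZpos : 0 < Z)
    (habs : ∀ θ x, 0 < p θ x → 0 < pOld x)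
    (h1 : ∀ θ, Integrable (fun x => p θ x * Real.log (p θ x / pOld x)) ν)
    (h2 : ∀ θ, Integrable
      (fun x => p θ x * Real.log (p θ x / (pOld x * Real.exp (A x) / Z))) ν)
    (h3 : ∀ θ, Integrable (fun x => p θ x * A x) ν) :
    deriv (fun θ => ∫ x, p θ x * A x ∂ν) θ₀ =
      deriv (fun θ =>
        -(∫ x, p θ x * Real.log (p θ x / (pOld x * Real.exp (A x) / Z)) ∂ν)
          + ∫ x, p θ x * Real.log (p θ x / pOld x) ∂ν) θ₀ := by
  have key : ∀ θ,
      -(∫ x, p θ x * Real.log (p θ x / (pOld x * Real.exp (A x) / Z)) ∂ν)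
        + ∫ x, p θ x * Real.log (p θ x / pOld x) ∂ν
      = (∫ x, p θ x * A x ∂ν) - Real.log Z := by
    intro θ
    have hpt : ∀ x, p θ x * Real.log (p θ x / pOld x)
        - p θ x * Real.log (p θ x / (pOld x * Real.exp (A x) / Z))
        = p θ x * A x - p θ x * Real.log Z := by
      intro x
      rcases eq_or_lt_of_le (hpθ θ x) with h0 | hpos
      · simp [← h0]
      · have hold := habs θ x hpos
        have hZne : Z ≠ 0 := ne_of_gt hZpos
        have holdne : pOld x ≠ 0 := ne_of_gt hold
        have hexp : Real.exp (A x) ≠ 0 := Real.exp_ne_zero _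
        have hden : pOld x * Real.exp (A x) / Z ≠ 0 := by
          exact div_ne_zero (mul_ne_zero holdne hexp) hZne
        rw [Real.log_div (ne_of_gt hpos) holdne,
            Real.log_div (ne_of_gt hpos) hden,
            Real.log_div (mul_ne_zero holdne hexp) hZne,
            Real.log_mul holdne hexp, Real.log_exp]
        ring
    have hInt : ∀ θ', Integrable (fun x => p θ' x * Real.log Z) ν := by
      intro θ'
      have : Integrable (fun x => p θ' x) ν := by
        by_contra h
        have h1' := hpθInt θ'
        rw [integral_undef h] at h1'
        exact one_ne_zero h1'.symm
      exact this.mul_const _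
    calc -(∫ x, p θ x * Real.log (p θ x / (pOld x * Real.exp (A x) / Z)) ∂ν)
          + ∫ x, p θ x * Real.log (p θ x / pOld x) ∂ν
        = ∫ x, (p θ x * Real.log (p θ x / pOld x)
            - p θ x * Real.log (p θ x / (pOld x * Real.exp (A x) / Z))) ∂ν := by
          rw [integral_sub (h1 θ) (h2 θ)]; ring
      _ = ∫ x, (p θ x * A x - p θ x * Real.log Z) ∂ν := by
          exact integral_congr_ae (Filter.Eventually.of_forall hpt)
      _ = (∫ x, p θ x * A x ∂ν) - ∫ x, p θ x * Real.log Z ∂ν := by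
          rw [integral_sub (h3 θ) (hInt θ)]
      _ = (∫ x, p θ x * A x ∂ν) - Real.log Z := by
          rw [integral_mul_const, hpθInt θ, one_mul]
  have : (fun θ =>
      -(∫ x, p θ x * Real.log (p θ x / (pOld x * Real.exp (A x) / Z)) ∂ν)
        + ∫ x, p θ x * Real.log (p θ x / pOld x) ∂ν)
      = fun θ => (∫ x, p θ x * A x ∂ν) - Real.log Z := funext key
  rw [this, deriv_sub_const]
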